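/- Let T and S be bounded linear operators on H such that there exists c > 0 with ‖Tx‖_A ≤ c‖x‖_A and ‖Sx‖_A ≤ c‖x‖_A for all x ∈ H (so that the A-seminorms below are finite). Then ‖T+S‖_A ≤ ∫₀¹ ‖λT + (1−λ)(T+S)/2‖_A dλ + ∫₀¹ ‖λS + (1−λ)(T+S)/2‖_A dλ ≤ ‖T‖_A + ‖S‖_A. -/

import Mathlib

open ContinuousLinearMap

set_option maxHeartbeats 1000000
set_option synthInstance.maxHeartbeats 1000000


variable {H : Type*} [NormedAddCommGroup H] [InnerProductSpace ℂ H] [CompleteSpace H]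

/-- The seminorm on `H` induced by a positive operator `A`: `‖x‖_A = √⟨Ax,x⟩`. -/
noncomputable def vnA (A : H →L[ℂ] H) (x : H) : ℝ :=
  Real.sqrt (RCLike.re (inner ℂ (A x) x : ℂ))

/-- The `A`-seminorm of an operator: `‖X‖_A = sup {‖Xx‖_A : ‖x‖_A = 1}`. -/
noncomputable def opnA (A : H →L[ℂ] H) (X : H →L[ℂ] H) : ℝ :=
  sSup ((fun x => vnA A (X x)) '' {x : H | vnA A x = 1})

/-- The `A`-numerical radius: `ω_A(X) = sup {|⟨Xx,x⟩_A| : ‖x‖_A = 1}`. -/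
noncomputable def wA (A : H →L[ℂ] H) (X : H →L[ℂ] H) : ℝ :=
  sSup ((fun x => ‖(inner ℂ (A (X x)) x : ℂ)‖) '' {x : H | vnA A x = 1})

/-- `S` is the reduced `A`-adjoint of `T`: `A ∘ S = T* ∘ A` and
`range S ⊆ closure (range A)`. -/
def IsReducedAdjA (A T S : H →L[ℂ] H) : Prop :=
  A ∘L S = (ContinuousLinearMap.adjoint T) ∘L A ∧
    Set.range S ⊆ closure (Set.range (A : H → H))

/-- `X` is `A`-selfadjoint: `A ∘ X = X* ∘ A`. -/
def IsSelfAdjA (A X : H →L[ℂ] H) : Prop :=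
  A ∘L X = (ContinuousLinearMap.adjoint X) ∘L A

/-- `Re_A(T) = (T + T♯)/2`. -/
noncomputable def ReA (T Ts : H →L[ℂ] H) : H →L[ℂ] H := (2 : ℂ)⁻¹ • (T + Ts)

/-- `Im_A(T) = (T - T♯)/(2i)`. -/
noncomputable def ImA (T Ts : H →L[ℂ] H) : H →L[ℂ] H := (2 * Complex.I)⁻¹ • (T - Ts)


lemma vnA_eq_norm (A : H →L[ℂ] H) (hA : A.IsPositive) (x : H) :
    vnA A x = ‖CFC.sqrt A x‖ := by
  have hA' : (0:H →L[ℂ] H) ≤ A := (A.nonneg_iff_isPositive).mpr hA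
  have hB : IsSelfAdjoint (CFC.sqrt A) :=
    ((ContinuousLinearMap.nonneg_iff_isPositive _).mp (CFC.sqrt_nonneg _)).isSelfAdjoint
  have h1 : A x = CFC.sqrt A (CFC.sqrt A x) := by
    conv_lhs => rw [← CFC.sqrt_mul_sqrt_self A hA']
    rfl
  have h2 : (inner ℂ (A x) x : ℂ) = inner ℂ (CFC.sqrt A x) (CFC.sqrt A x) := by
    calc (inner ℂ (A x) x : ℂ)
        = inner ℂ (ContinuousLinearMap.adjoint (CFC.sqrt A) (CFC.sqrt A x)) x := by
          rw [h1, hB.adjoint_eq]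
      _ = inner ℂ (CFC.sqrt A x) (CFC.sqrt A x) :=
          ContinuousLinearMap.adjoint_inner_left (CFC.sqrt A) x (CFC.sqrt A x)
  rw [vnA, h2, @inner_self_eq_norm_sq ℂ]
  exact Real.sqrt_sq (norm_nonneg _)

section helpers
variable {H : Type*} [NormedAddCommGroup H] [InnerProductSpace ℂ H] [CompleteSpace H]
variable (A : H →L[ℂ] H)

lemma vnA_nonneg (x : H) : 0 ≤ vnA A x := Real.sqrt_nonneg _

lemma vnA_add_le (hA : A.IsPositive) (x y : H) : vnA A (x + y) ≤ vnA A x + vnA A y := by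
  simp only [vnA_eq_norm A hA, map_add]
  exact norm_add_le _ _

lemma vnA_smul (hA : A.IsPositive) (c : ℂ) (x : H) : vnA A (c • x) = ‖c‖ * vnA A x := by
  simp only [vnA_eq_norm A hA, map_smul, norm_smul]

lemma unit_exists (hA : A.IsPositive) (hA0 : A ≠ 0) : ∃ x : H, vnA A x = 1 := by
  have hA' : (0:H →L[ℂ] H) ≤ A := (A.nonneg_iff_isPositive).mpr hA
  have hB : CFC.sqrt A ≠ 0 := by
    intro h
    apply hA0
    have := CFC.sqrt_mul_sqrt_self A hA'
    rw [h, mul_zero] at this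
    exact this.symm
  obtain ⟨x, hx⟩ : ∃ x : H, CFC.sqrt A x ≠ 0 := by
    by_contra h
    push_neg at h
    exact hB (ContinuousLinearMap.ext fun x => by simp [h x])
  refine ⟨((‖CFC.sqrt A x‖ : ℂ))⁻¹ • x, ?_⟩
  rw [vnA_smul A hA, vnA_eq_norm A hA]
  have : ‖CFC.sqrt A x‖ ≠ 0 := norm_ne_zero_iff.mpr hx
  simp [this]

lemma opnA_le_of (hA : A.IsPositive) (X : H →L[ℂ] H) (hA0 : A ≠ 0) {m : ℝ}
    (h : ∀ x : H, vnA A x = 1 → vnA A (X x) ≤ m) : opnA A X ≤ m := by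
  obtain ⟨x₀, hx₀⟩ := unit_exists A hA hA0
  exact csSup_le ⟨vnA A (X x₀), ⟨x₀, hx₀, rfl⟩⟩ (by rintro r ⟨x, hx, rfl⟩; exact h x hx)

lemma le_opnA_of (X : H →L[ℂ] H) {m : ℝ}
    (h : ∀ x : H, vnA A x = 1 → vnA A (X x) ≤ m) {x : H} (hx : vnA A x = 1) :
    vnA A (X x) ≤ opnA A X :=
  le_csSup ⟨m, by rintro r ⟨y, hy, rfl⟩; exact h y hy⟩ ⟨x, hx, rfl⟩

end helpers

lemma vnA_sub_le (A : H →L[ℂ] H) (hA : A.IsPositive) (x y : H) :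
    vnA A (x - y) ≤ vnA A x + vnA A y := by
  simp only [vnA_eq_norm A hA, map_sub]
  exact norm_sub_le _ _

theorem stmt3 (A T S : H →L[ℂ] H) (hA : A.IsPositive) (hA0 : A ≠ 0)
    (hc : ∃ c > (0:ℝ), ∀ x : H, vnA A (T x) ≤ c * vnA A x ∧ vnA A (S x) ≤ c * vnA A x) :
    opnA A (T + S) ≤ (∫ l in (0:ℝ)..1, opnA A ((l:ℂ) • T + ((1:ℂ) - (l:ℂ)) • ((2:ℂ)⁻¹ • (T + S)))) + (∫ l in (0:ℝ)..1, opnA A ((l:ℂ) • S + ((1:ℂ) - (l:ℂ)) • ((2:ℂ)⁻¹ • (T + S)))) ∧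
    (∫ l in (0:ℝ)..1, opnA A ((l:ℂ) • T + ((1:ℂ) - (l:ℂ)) • ((2:ℂ)⁻¹ • (T + S)))) + (∫ l in (0:ℝ)..1, opnA A ((l:ℂ) • S + ((1:ℂ) - (l:ℂ)) • ((2:ℂ)⁻¹ • (T + S)))) ≤ opnA A T + opnA A S := by
  obtain ⟨c, hc0, hcb⟩ := hc
  have hTb : ∀ x : H, vnA A x = 1 → vnA A (T x) ≤ c := fun x hx => by
    simpa [hx] using (hcb x).1
  have hSb : ∀ x : H, vnA A x = 1 → vnA A (S x) ≤ c := fun x hx => by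
    simpa [hx] using (hcb x).2
  set M : H →L[ℂ] H := (2:ℂ)⁻¹ • (T + S) with hMdef
  have hMx : ∀ x : H, M x = (2:ℂ)⁻¹ • (T x + S x) := fun x => by simp [hMdef]
  have h2inv : ‖(2:ℂ)⁻¹‖ = 2⁻¹ := by simp
  have hMb : ∀ x : H, vnA A x = 1 → vnA A (M x) ≤ c := by
    intro x hx
    rw [hMx, vnA_smul A hA, h2inv]
    have h1 : vnA A (T x + S x) ≤ c + c :=
      le_trans (vnA_add_le A hA _ _) (add_le_add (hTb x hx) (hSb x hx))
    linarith
  set a := opnA A T with hadef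
  set b := opnA A S with hbdef
  have hTa : ∀ x : H, vnA A x = 1 → vnA A (T x) ≤ a := fun x hx => le_opnA_of A T hTb hx
  have hSa : ∀ x : H, vnA A x = 1 → vnA A (S x) ≤ b := fun x hx => le_opnA_of A S hSb hx
  obtain ⟨x₀, hx₀⟩ := unit_exists A hA hA0
  have ha0 : 0 ≤ a := le_trans (vnA_nonneg A _) (hTa x₀ hx₀)
  have hb0 : 0 ≤ b := le_trans (vnA_nonneg A _) (hSa x₀ hx₀)
  have hMab : ∀ x : H, vnA A x = 1 → vnA A (M x) ≤ (a + b) / 2 := by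
    intro x hx
    rw [hMx, vnA_smul A hA, h2inv]
    have h1 : vnA A (T x + S x) ≤ a + b :=
      le_trans (vnA_add_le A hA _ _) (add_le_add (hTa x hx) (hSa x hx))
    linarith
  have e1 : ∀ l : ℝ, ‖((l:ℝ):ℂ)‖ = |l| := fun l => by simp
  have e2 : ∀ l : ℝ, ‖(1:ℂ) - (l:ℂ)‖ = |1 - l| := by
    intro l
    rw [show (1:ℂ) - (l:ℂ) = ((1 - l : ℝ) : ℂ) by push_cast; ring, Complex.norm_real,
      Real.norm_eq_abs]
  have hXapp : ∀ (P : H →L[ℂ] H) (l : ℝ) (x : H),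
      ((l:ℂ) • P + ((1:ℂ) - (l:ℂ)) • M) x = (l:ℂ) • P x + ((1:ℂ) - (l:ℂ)) • M x := by
    intro P l x; simp
  have hXbound : ∀ (P : H →L[ℂ] H) (m mM : ℝ), (∀ x, vnA A x = 1 → vnA A (P x) ≤ m) →
      (∀ x, vnA A x = 1 → vnA A (M x) ≤ mM) → ∀ (l : ℝ) (x : H), vnA A x = 1 →
      vnA A (((l:ℂ) • P + ((1:ℂ) - (l:ℂ)) • M) x) ≤ |l| * m + |1 - l| * mM := by
    intro P m mM hP hM l x hx
    rw [hXapp]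
    refine (vnA_add_le A hA _ _).trans ?_
    rw [vnA_smul A hA, vnA_smul A hA, e1, e2]
    exact add_le_add (mul_le_mul_of_nonneg_left (hP x hx) (abs_nonneg _))
      (mul_le_mul_of_nonneg_left (hM x hx) (abs_nonneg _))
  have hid : ∀ (P : H →L[ℂ] H) (l l' : ℝ) (x : H),
      ((l:ℂ) • P + ((1:ℂ) - (l:ℂ)) • M) x
        = ((l':ℂ) • P + ((1:ℂ) - (l':ℂ)) • M) x + ((l - l' : ℝ) : ℂ) • (P x - M x) := by
    intro P l l' x
    simp only [ContinuousLinearMap.add_apply, ContinuousLinearMap.smul_apply]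
    push_cast
    module
  have hlip : ∀ (P : H →L[ℂ] H), (∀ x, vnA A x = 1 → vnA A (P x) ≤ c) → ∀ l l' : ℝ,
      opnA A ((l:ℂ) • P + ((1:ℂ) - (l:ℂ)) • M)
        ≤ opnA A ((l':ℂ) • P + ((1:ℂ) - (l':ℂ)) • M) + 2 * c * |l - l'| := by
    intro P hP l l'
    apply opnA_le_of A hA _ hA0
    intro x hx
    rw [hid P l l' x]
    refine (vnA_add_le A hA _ _).trans (add_le_add ?_ ?_)
    · exact le_opnA_of A _
        (fun y hy => hXbound P c c hP hMb l' y hy) hx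
    · rw [vnA_smul A hA, e1]
      have h1 : vnA A (P x - M x) ≤ 2 * c :=
        le_trans (vnA_sub_le A hA _ _) (by linarith [hP x hx, hMb x hx])
      calc |l - l'| * vnA A (P x - M x) ≤ |l - l'| * (2 * c) :=
            mul_le_mul_of_nonneg_left h1 (abs_nonneg _)
        _ = 2 * c * |l - l'| := by ring
  have hcont : ∀ (P : H →L[ℂ] H), (∀ x, vnA A x = 1 → vnA A (P x) ≤ c) →
      Continuous (fun l : ℝ => opnA A ((l:ℂ) • P + ((1:ℂ) - (l:ℂ)) • M)) := by
    intro P hP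
    refine (LipschitzWith.of_dist_le_mul (K := (⟨2 * c, by positivity⟩ : NNReal)) ?_).continuous
    intro l l'
    rw [Real.dist_eq, Real.dist_eq]
    change |_ - _| ≤ 2 * c * |l - l'|
    rw [abs_sub_le_iff]
    have h1 := hlip P hP l l'
    have h2 := hlip P hP l' l
    rw [abs_sub_comm] at h2
    constructor <;> [linarith; linarith]
  have hFint : IntervalIntegrable (fun l : ℝ => opnA A ((l:ℂ) • T + ((1:ℂ) - (l:ℂ)) • M))
      MeasureTheory.volume 0 1 := (hcont T hTb).intervalIntegrable 0 1
  have hGint : IntervalIntegrable (fun l : ℝ => opnA A ((l:ℂ) • S + ((1:ℂ) - (l:ℂ)) • M))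
      MeasureTheory.volume 0 1 := (hcont S hSb).intervalIntegrable 0 1
  constructor
  · apply opnA_le_of A hA _ hA0
    intro x hx
    have key1 : ∀ l : ℝ, vnA A ((T + S) x)
        ≤ opnA A ((l:ℂ) • T + ((1:ℂ) - (l:ℂ)) • M)
          + opnA A ((l:ℂ) • S + ((1:ℂ) - (l:ℂ)) • M) := by
      intro l
      have hsum : (T + S) x
          = ((l:ℂ) • T + ((1:ℂ) - (l:ℂ)) • M) x + ((l:ℂ) • S + ((1:ℂ) - (l:ℂ)) • M) x := by
        simp only [ContinuousLinearMap.add_apply, ContinuousLinearMap.smul_apply, hMx]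
        module
      rw [hsum]
      refine (vnA_add_le A hA _ _).trans (add_le_add ?_ ?_)
      · exact le_opnA_of A _ (fun y hy => hXbound T c c hTb hMb l y hy) hx
      · exact le_opnA_of A _ (fun y hy => hXbound S c c hSb hMb l y hy) hx
    have hconst : vnA A ((T + S) x) = ∫ l in (0:ℝ)..1, vnA A ((T + S) x) := by simp
    rw [hconst]
    have hmono := intervalIntegral.integral_mono_on (by norm_num : (0:ℝ) ≤ 1)
      (intervalIntegrable_const (c := vnA A ((T + S) x))) (hFint.add hGint)
      (fun l _ => key1 l)
    rw [intervalIntegral.integral_add hFint hGint] at hmono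
    exact hmono
  · have keyF : ∀ l ∈ Set.Icc (0:ℝ) 1,
        opnA A ((l:ℂ) • T + ((1:ℂ) - (l:ℂ)) • M) ≤ l * a + (1 - l) * ((a + b) / 2) := by
      intro l hl
      apply opnA_le_of A hA _ hA0
      intro x hx
      refine (hXbound T a ((a + b) / 2) hTa hMab l x hx).trans ?_
      rw [abs_of_nonneg hl.1, abs_of_nonneg (by linarith [hl.2] : (0:ℝ) ≤ 1 - l)]
    have keyG : ∀ l ∈ Set.Icc (0:ℝ) 1,
        opnA A ((l:ℂ) • S + ((1:ℂ) - (l:ℂ)) • M) ≤ l * b + (1 - l) * ((a + b) / 2) := by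
      intro l hl
      apply opnA_le_of A hA _ hA0
      intro x hx
      refine (hXbound S b ((a + b) / 2) hSa hMab l x hx).trans ?_
      rw [abs_of_nonneg hl.1, abs_of_nonneg (by linarith [hl.2] : (0:ℝ) ≤ 1 - l)]
    rw [← intervalIntegral.integral_add hFint hGint]
    have hmono := intervalIntegral.integral_mono_on (by norm_num : (0:ℝ) ≤ 1)
      (hFint.add hGint) (intervalIntegrable_const (c := a + b))
      (fun l hl => by
        have h1 := keyF l hl
        have h2 := keyG l hl
        have : l * a + (1 - l) * ((a + b) / 2) + (l * b + (1 - l) * ((a + b) / 2)) = a + b := by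
          ring
        linarith)
    simpa using hmono
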